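/- arXiv:1408.3306 — 6 statements merged into one kernel-verified Lean document; each statement's English description precedes it below -/
import Mathlib

section
/- If λ₁, λ₂ ∈ 𝔻, then (λ₁+λ₂, λ₁λ₂) satisfies |s - conj(s)p| + |p|² < 1 where s = λ₁+λ₂ and p = λ₁λ₂. -/
open Complex Metric

theorem stmt1 (l1 l2 : ℂ) (h1 : l1 ∈ ball (0:ℂ) 1) (h2 : l2 ∈ ball (0:ℂ) 1) :
    ‖(l1 + l2) - (starRingEnd ℂ) (l1 + l2) * (l1 * l2)‖ +
      (‖l1 * l2‖) ^ 2 < 1 := by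
  simp only [mem_ball, dist_zero_right] at h1 h2
  set a := ‖l1‖ with ha
  set b := ‖l2‖ with hb
  have ha0 : 0 ≤ a := norm_nonneg _
  have hb0 : 0 ≤ b := norm_nonneg _
  have key : ‖(l1 + l2) - (starRingEnd ℂ) (l1 + l2) * (l1 * l2)‖
      ≤ a * (1 - b^2) + b * (1 - a^2) := by
    have heq : (l1 + l2) - (starRingEnd ℂ) (l1 + l2) * (l1 * l2)
        = l1 * (1 - (starRingEnd ℂ) l2 * l2) + l2 * (1 - (starRingEnd ℂ) l1 * l1) := by
      simp [map_add]; ring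
    rw [heq]
    have h2' : ‖1 - (starRingEnd ℂ) l2 * l2‖ = 1 - b^2 := by
      rw [mul_comm ((starRingEnd ℂ) _), Complex.mul_conj']
      have : ((1 : ℂ) - (‖l2‖ : ℂ)^2) = ((1 - b^2 : ℝ) : ℂ) := by
        rw [hb]; push_cast; ring
      rw [this, Complex.norm_real, Real.norm_eq_abs]
      exact abs_of_nonneg (by nlinarith)
    have h1' : ‖1 - (starRingEnd ℂ) l1 * l1‖ = 1 - a^2 := by
      rw [mul_comm ((starRingEnd ℂ) _), Complex.mul_conj']
      have : ((1 : ℂ) - (‖l1‖ : ℂ)^2) = ((1 - a^2 : ℝ) : ℂ) := by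
        rw [ha]; push_cast; ring
      rw [this, Complex.norm_real, Real.norm_eq_abs]
      exact abs_of_nonneg (by nlinarith)
    calc ‖l1 * (1 - (starRingEnd ℂ) l2 * l2) + l2 * (1 - (starRingEnd ℂ) l1 * l1)‖
        ≤ ‖l1 * (1 - (starRingEnd ℂ) l2 * l2)‖ +
          ‖l2 * (1 - (starRingEnd ℂ) l1 * l1)‖ := norm_add_le _ _
      _ = a * (1 - b^2) + b * (1 - a^2) := by rw [norm_mul, norm_mul, h1', h2']
  have habs : ‖l1 * l2‖ = a * b := norm_mul _ _
  rw [habs]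
  nlinarith [mul_pos (mul_pos (sub_pos.mpr h1) (sub_pos.mpr h2)) (sub_pos.mpr (by nlinarith : a * b < 1))]
end

section
/- A point (s,p) ∈ ℂ² lies in the topological boundary of the symmetrized bidisc G₂ if and only if |s| ≤ 2 and |s - conj(s)·p| + |p|² = 1. -/
open Complex

/-- The symmetrized bidisc, described by its defining inequality. -/
def symBidisc : Set (ℂ × ℂ) :=
  {q | ‖q.1 - (starRingEnd ℂ) q.1 * q.2‖ + (‖q.2‖) ^ 2 < 1}

noncomputable def symF : ℂ × ℂ → ℝ :=
  fun q => ‖q.1 - (starRingEnd ℂ) q.1 * q.2‖ + (‖q.2‖) ^ 2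

lemma symF_cont : Continuous symF := by
  apply Continuous.add
  · exact continuous_norm.comp
      (continuous_fst.sub ((Complex.continuous_conj.comp continuous_fst).mul continuous_snd))
  · exact (continuous_norm.comp continuous_snd).pow 2

lemma symBidisc_open : IsOpen symBidisc :=
  isOpen_lt symF_cont continuous_const

lemma symBidisc_abs_fst_le (q : ℂ × ℂ) (hq : q ∈ symBidisc) : ‖q.1‖ ≤ 2 := by
  obtain ⟨s, p⟩ := q
  have h : ‖s - (starRingEnd ℂ) s * p‖ + (‖p‖) ^ 2 < 1 := hq
  have hA : (0:ℝ) ≤ ‖s - (starRingEnd ℂ) s * p‖ := norm_nonneg _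
  have hr : (0:ℝ) ≤ ‖p‖ := norm_nonneg _
  have hr1 : ‖p‖ < 1 := by nlinarith
  have htri : ‖s‖ ≤ ‖s - (starRingEnd ℂ) s * p‖ +
      ‖s‖ * ‖p‖ := by
    calc ‖s‖ = ‖(s - (starRingEnd ℂ) s * p) + (starRingEnd ℂ) s * p‖ := by
          ring_nf
      _ ≤ ‖s - (starRingEnd ℂ) s * p‖ + ‖(starRingEnd ℂ) s * p‖ :=
          norm_add_le _ _
      _ = ‖s - (starRingEnd ℂ) s * p‖ + ‖s‖ * ‖p‖ := by
          rw [norm_mul, Complex.norm_conj]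
  nlinarith [norm_nonneg s]

theorem stmt4 (s p : ℂ) :
    (s, p) ∈ frontier symBidisc ↔
      ‖s‖ ≤ 2 ∧
        ‖s - (starRingEnd ℂ) s * p‖ + (‖p‖) ^ 2 = 1 := by
  rw [frontier, symBidisc_open.interior_eq, Set.mem_diff]
  constructor
  · rintro ⟨hcl, hni⟩
    have hle2 : ‖s‖ ≤ 2 := by
      have hclosed : IsClosed {q : ℂ × ℂ | ‖q.1‖ ≤ 2} :=
        isClosed_le (continuous_norm.comp continuous_fst) continuous_const
      exact (hclosed.closure_subset_iff.2 symBidisc_abs_fst_le) hcl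
    have hle1 : symF (s, p) ≤ 1 := by
      have hclosed : IsClosed {q : ℂ × ℂ | symF q ≤ 1} :=
        isClosed_le symF_cont continuous_const
      have hsub : symBidisc ⊆ {q : ℂ × ℂ | symF q ≤ 1} := fun q hq => show symF q ≤ 1 from le_of_lt hq
      exact (hclosed.closure_subset_iff.2 hsub) hcl
    have hnlt : ¬ symF (s, p) < 1 := hni
    exact ⟨hle2, le_antisymm hle1 (not_lt.1 hnlt)⟩
  · rintro ⟨ha, heq⟩
    refine ⟨?_, ?_⟩
    · -- in closure: limit of (t s, t p) as t → 1⁻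
      have htend : Filter.Tendsto (fun t : ℝ => (((t:ℂ) * s, (t:ℂ) * p) : ℂ × ℂ))
          (nhdsWithin 1 (Set.Iio 1)) (nhds (s, p)) := by
        have hc : Continuous (fun t : ℝ => (((t:ℂ) * s, (t:ℂ) * p) : ℂ × ℂ)) := by fun_prop
        have := hc.tendsto 1
        simp only [Complex.ofReal_one, one_mul] at this
        exact this.mono_left nhdsWithin_le_nhds
      apply mem_closure_of_tendsto htend
      have h0 : ∀ᶠ t : ℝ in nhdsWithin 1 (Set.Iio 1), 0 < t :=
        eventually_nhdsWithin_of_eventually_nhds (eventually_gt_nhds one_pos)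
      filter_upwards [h0, self_mem_nhdsWithin] with t ht0 ht1
      have ht1' : t < 1 := ht1
      -- core inequality
      set A := ‖s - (starRingEnd ℂ) s * p‖ with hA
      set r := ‖p‖ with hrdef
      have hAnn : 0 ≤ A := norm_nonneg _
      have hrnn : 0 ≤ r := norm_nonneg _
      have hann : 0 ≤ ‖s‖ := norm_nonneg _
      have hr1 : r ≤ 1 := by nlinarith
      have hkey : ‖(t:ℂ) * s - (starRingEnd ℂ) ((t:ℂ) * s) * ((t:ℂ) * p)‖
          ≤ t * A + (t * (1 - t)) * (‖s‖ * r) := by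
        have heq2 : (t:ℂ) * s - (starRingEnd ℂ) ((t:ℂ) * s) * ((t:ℂ) * p)
            = (t:ℂ) * (s - (starRingEnd ℂ) s * p)
              + ((t:ℂ) * (1 - (t:ℂ))) * ((starRingEnd ℂ) s * p) := by
          simp only [map_mul, Complex.conj_ofReal]
          ring
        rw [heq2]
        calc ‖_‖ ≤ ‖(t:ℂ) * (s - (starRingEnd ℂ) s * p)‖
              + ‖((t:ℂ) * (1 - (t:ℂ))) * ((starRingEnd ℂ) s * p)‖ :=
            norm_add_le _ _
          _ = t * A + (t * (1 - t)) * (‖s‖ * r) := by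
            rw [norm_mul, norm_mul, norm_mul, norm_mul, Complex.norm_conj]
            have h1 : ‖(t:ℂ)‖ = t := by
              rw [Complex.norm_real, Real.norm_eq_abs, abs_of_pos ht0]
            have h2 : ‖1 - (t:ℂ)‖ = 1 - t := by
              have : (1 - (t:ℂ)) = ((1 - t : ℝ) : ℂ) := by push_cast; ring
              rw [this, Complex.norm_real, Real.norm_eq_abs, abs_of_pos (by linarith)]
            rw [h1, h2]
      have habs : ‖(t:ℂ) * p‖ = t * r := by
        rw [norm_mul, Complex.norm_real, Real.norm_eq_abs, abs_of_pos ht0]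
      show ‖(t:ℂ) * s - (starRingEnd ℂ) ((t:ℂ) * s) * ((t:ℂ) * p)‖
          + (‖(t:ℂ) * p‖) ^ 2 < 1
      rw [habs]
      have hsr : t * (1 - t) * (‖s‖ * r) ≤ t * (1 - t) * (2 * r) := by
        apply mul_le_mul_of_nonneg_left _ (by nlinarith)
        exact mul_le_mul_of_nonneg_right ha hrnn
      nlinarith [sq_nonneg (1 - r), mul_pos ht0 (show (0:ℝ) < 1 - t by linarith),
        mul_nonneg (mul_nonneg ht0.le (show (0:ℝ) ≤ 1 - t by linarith))
          (sq_nonneg (1 - r))]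
    · intro hmem
      have : symF (s, p) < 1 := hmem
      simp only [symF] at this
      exact absurd heq (ne_of_lt this)
end

section
/- For every μ ∈ 𝕋 (the unit circle), the map (a,s,p) ↦ (μ a, μ s, μ² p) maps the pentablock 𝒫 onto itself; i.e., 𝒫 is a (1,1,2)-quasi-circular (indeed quasi-balanced: the same holds for all μ ∈ closure(𝔻)) domain containing the origin. -/
open Complex Metric

/-- The pentablock. -/
def pentablock : Set (ℂ × ℂ × ℂ) :=
  {x | ∃ a l1 l2 : ℂ, l1 ∈ ball (0:ℂ) 1 ∧ l2 ∈ ball (0:ℂ) 1 ∧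
    x = (a, l1 + l2, l1 * l2) ∧
    ‖a‖ < (1/2) * ‖1 - l1 * (starRingEnd ℂ) l2‖ +
      (1/2) * Real.sqrt (1 - ‖l1‖ ^ 2) * Real.sqrt (1 - ‖l2‖ ^ 2)}

lemma pent_zero : ((0, 0, 0) : ℂ × ℂ × ℂ) ∈ pentablock := by
  refine ⟨0, 0, 0, by simp, by simp, by simp, ?_⟩
  simp

lemma aux_abs {μ l1 l2 : ℂ} (hμ : ‖μ‖ ≤ 1) (h1 : ‖l1‖ < 1)
    (h2 : ‖l2‖ < 1) :
    ‖μ‖ * ‖1 - l1 * (starRingEnd ℂ) l2‖ ≤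
      ‖1 - (μ * l1) * (starRingEnd ℂ) (μ * l2)‖ := by
  have hconj : (μ * l1) * (starRingEnd ℂ) (μ * l2)
      = ((Complex.normSq μ : ℝ) : ℂ) * (l1 * (starRingEnd ℂ) l2) := by
    rw [map_mul, ← Complex.mul_conj]; ring
  rw [hconj]
  set lam := l1 * (starRingEnd ℂ) l2 with hlam
  set t := Complex.normSq μ with htdef
  have ht0 : 0 ≤ t := Complex.normSq_nonneg μ
  have ht1 : t ≤ 1 := by
    rw [htdef, Complex.normSq_eq_norm_sq]
    nlinarith [norm_nonneg μ]
  have hlam1 : Complex.normSq lam ≤ 1 := by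
    rw [hlam, Complex.normSq_mul, Complex.normSq_conj, Complex.normSq_eq_norm_sq,
      Complex.normSq_eq_norm_sq]
    have e1 : ‖l1‖ ^ 2 ≤ 1 := by nlinarith [norm_nonneg l1]
    have e2 : ‖l2‖ ^ 2 ≤ 1 := by nlinarith [norm_nonneg l2]
    nlinarith [sq_nonneg (‖l1‖), sq_nonneg (‖l2‖), e1, e2]
  refine le_of_pow_le_pow_left₀ (two_ne_zero) (norm_nonneg _) ?_
  rw [mul_pow, Complex.sq_norm, Complex.sq_norm, Complex.sq_norm]
  have h1' : Complex.normSq (1 - (t : ℂ) * lam)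
      = 1 - 2 * t * lam.re + t ^ 2 * (lam.re ^ 2 + lam.im ^ 2) := by
    simp [Complex.normSq_apply]
    ring
  have h2' : Complex.normSq (1 - lam) = 1 - 2 * lam.re + (lam.re ^ 2 + lam.im ^ 2) := by
    simp [Complex.normSq_apply]
    ring
  have h3' : Complex.normSq lam = lam.re ^ 2 + lam.im ^ 2 := by
    simp [Complex.normSq_apply]; ring
  rw [h1', h2']
  nlinarith [sq_nonneg (1 - t), h3' ▸ hlam1]

lemma aux_sqrt {μ l1 l2 : ℂ} (hμ : ‖μ‖ ≤ 1) (h1 : ‖l1‖ < 1)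
    (h2 : ‖l2‖ < 1) :
    ‖μ‖ * (Real.sqrt (1 - ‖l1‖ ^ 2) * Real.sqrt (1 - ‖l2‖ ^ 2)) ≤
      Real.sqrt (1 - ‖μ * l1‖ ^ 2) * Real.sqrt (1 - ‖μ * l2‖ ^ 2) := by
  have hμ0 := norm_nonneg μ
  have key : ∀ l : ℂ, ‖l‖ < 1 →
      Real.sqrt (1 - ‖l‖ ^ 2) ≤ Real.sqrt (1 - ‖μ * l‖ ^ 2) := by
    intro l hl
    apply Real.sqrt_le_sqrt
    rw [norm_mul]
    have e1 : ‖μ‖ ^ 2 ≤ 1 := by nlinarith [norm_nonneg μ]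
    nlinarith [sq_nonneg (‖l‖), e1, mul_nonneg (sq_nonneg (‖μ‖)) (sq_nonneg (‖l‖))]
  calc ‖μ‖ * (Real.sqrt (1 - ‖l1‖ ^ 2) * Real.sqrt (1 - ‖l2‖ ^ 2))
      ≤ 1 * (Real.sqrt (1 - ‖l1‖ ^ 2) * Real.sqrt (1 - ‖l2‖ ^ 2)) := by
        apply mul_le_mul_of_nonneg_right hμ
        positivity
    _ = Real.sqrt (1 - ‖l1‖ ^ 2) * Real.sqrt (1 - ‖l2‖ ^ 2) := one_mul _
    _ ≤ Real.sqrt (1 - ‖μ * l1‖ ^ 2) * Real.sqrt (1 - ‖μ * l2‖ ^ 2) := by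
        apply mul_le_mul (key l1 h1) (key l2 h2) (Real.sqrt_nonneg _) (Real.sqrt_nonneg _)

lemma pent_mul {μ : ℂ} (hμ : ‖μ‖ ≤ 1) {x : ℂ × ℂ × ℂ} (hx : x ∈ pentablock) :
    ((μ * x.1, μ * x.2.1, μ ^ 2 * x.2.2) : ℂ × ℂ × ℂ) ∈ pentablock := by
  obtain ⟨a, l1, l2, h1, h2, hxeq, hlt⟩ := hx
  rw [mem_ball_zero_iff] at h1 h2
  subst hxeq
  refine ⟨μ * a, μ * l1, μ * l2, ?_, ?_, ?_, ?_⟩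
  · rw [mem_ball_zero_iff, norm_mul]
    nlinarith [norm_nonneg μ, norm_nonneg l1]
  · rw [mem_ball_zero_iff, norm_mul]
    nlinarith [norm_nonneg μ, norm_nonneg l2]
  · simp only [Prod.mk.injEq]
    refine ⟨trivial, by ring, by ring⟩
  · rcases eq_or_lt_of_le (norm_nonneg μ) with hz | hz
    · have hμ0 : μ = 0 := by
        have := norm_eq_zero.mp hz.symm
        exact this
      subst hμ0
      simp
    · have hA := aux_abs hμ h1 h2
      have hB := aux_sqrt hμ h1 h2
      have hstep : ‖μ‖ * ‖a‖ <
          ‖μ‖ * ((1/2) * ‖1 - l1 * (starRingEnd ℂ) l2‖ +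
            (1/2) * Real.sqrt (1 - ‖l1‖ ^ 2) * Real.sqrt (1 - ‖l2‖ ^ 2)) :=
        (mul_lt_mul_iff_right₀ hz).mpr hlt
      rw [norm_mul]
      calc ‖μ‖ * ‖a‖
          < ‖μ‖ * ((1/2) * ‖1 - l1 * (starRingEnd ℂ) l2‖ +
            (1/2) * Real.sqrt (1 - ‖l1‖ ^ 2) * Real.sqrt (1 - ‖l2‖ ^ 2)) := hstep
        _ ≤ (1/2) * ‖1 - (μ * l1) * (starRingEnd ℂ) (μ * l2)‖ +
            (1/2) * Real.sqrt (1 - ‖μ * l1‖ ^ 2) *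
              Real.sqrt (1 - ‖μ * l2‖ ^ 2) := by
            nlinarith [hA, hB]

theorem stmt15 :
    ((0, 0, 0) : ℂ × ℂ × ℂ) ∈ pentablock ∧
    (∀ μ : ℂ, ‖μ‖ ≤ 1 → ∀ x ∈ pentablock,
      ((μ * x.1, μ * x.2.1, μ ^ 2 * x.2.2) : ℂ × ℂ × ℂ) ∈ pentablock) ∧
    (∀ μ : ℂ, ‖μ‖ = 1 →
      (fun x : ℂ × ℂ × ℂ => (μ * x.1, μ * x.2.1, μ ^ 2 * x.2.2)) '' pentablock
        = pentablock) := by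
  refine ⟨pent_zero, fun μ hμ x hx => pent_mul hμ hx, fun μ hμ => ?_⟩
  apply Set.Subset.antisymm
  · rintro _ ⟨x, hx, rfl⟩
    exact pent_mul hμ.le hx
  · intro x hx
    obtain ⟨x1, x2, x3⟩ := x
    have hconj : ‖(starRingEnd ℂ) μ‖ ≤ 1 := by
      rw [Complex.norm_conj, hμ]
    have hone : μ * (starRingEnd ℂ) μ = 1 := by
      rw [Complex.mul_conj]
      rw [Complex.normSq_eq_norm_sq, hμ]
      norm_num
    refine ⟨((starRingEnd ℂ) μ * x1, (starRingEnd ℂ) μ * x2,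
      ((starRingEnd ℂ) μ) ^ 2 * x3), pent_mul hconj hx, ?_⟩
    simp only [Prod.mk.injEq]
    refine ⟨?_, ?_, ?_⟩
    · rw [← mul_assoc, hone, one_mul]
    · rw [← mul_assoc, hone, one_mul]
    · rw [← mul_assoc, ← mul_pow, hone, one_pow, one_mul]
end

section
/- For each r with 0 < r < 1, the set 𝒫_r := {(ra, rs, r²p) : (a,s,p) ∈ 𝒫} has compact closure contained in 𝒫. -/
open Complex Metric

noncomputable def pentaH (l1 l2 : ℂ) : ℝ :=
  (1/2) * ‖1 - l1 * (starRingEnd ℂ) l2‖ +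
    (1/2) * Real.sqrt (1 - ‖l1‖ ^ 2) * Real.sqrt (1 - ‖l2‖ ^ 2)

def pentaT : Set (ℂ × ℂ × ℂ) :=
  {y | ‖y.2.1‖ ≤ 1 ∧ ‖y.2.2‖ ≤ 1 ∧ ‖y.1‖ ≤ pentaH y.2.1 y.2.2}

lemma key1 (r : ℝ) (hr0 : 0 < r) (hr1 : r < 1) (z : ℂ) (hz : ‖z‖ ≤ 1) :
    r * ‖1 - z‖ < ‖1 - (r:ℂ)^2 * z‖ := by
  have hz2 : z.re^2 + z.im^2 ≤ 1 := by
    have h := Complex.sq_norm z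
    rw [Complex.normSq_apply] at h
    nlinarith [norm_nonneg z]
  apply lt_of_pow_lt_pow_left₀ 2 (norm_nonneg _)
  rw [mul_pow, Complex.sq_norm, Complex.sq_norm, Complex.normSq_apply, Complex.normSq_apply]
  simp only [Complex.sub_re, Complex.sub_im, Complex.one_re, Complex.one_im,
    Complex.mul_re, Complex.mul_im, Complex.ofReal_re, Complex.ofReal_im, pow_two,
    Complex.ofReal_pow]
  nlinarith [mul_pos (show (0:ℝ) < 1 - r^2 by nlinarith)
    (show (0:ℝ) < 1 - r^2*(z.re^2+z.im^2) by nlinarith)]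

lemma key2 (r : ℝ) (hr0 : 0 < r) (hr1 : r < 1) (x y : ℝ) (hx0 : 0 ≤ x) (hx1 : x ≤ 1)
    (hy0 : 0 ≤ y) (hy1 : y ≤ 1) :
    r * (Real.sqrt (1 - x^2) * Real.sqrt (1 - y^2)) ≤
      Real.sqrt (1 - r^2*x^2) * Real.sqrt (1 - r^2*y^2) := by
  have hx2 : (0:ℝ) ≤ 1 - x^2 := by nlinarith
  have hy2 : (0:ℝ) ≤ 1 - y^2 := by nlinarith
  rw [← Real.sqrt_mul hx2, ← Real.sqrt_mul (by nlinarith : (0:ℝ) ≤ 1 - r^2*x^2)]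
  have h1 : r * Real.sqrt ((1-x^2)*(1-y^2)) = Real.sqrt (r^2 * ((1-x^2)*(1-y^2))) := by
    rw [Real.sqrt_mul (sq_nonneg r), Real.sqrt_sq hr0.le]
  rw [h1]
  apply Real.sqrt_le_sqrt
  have a1 : (0:ℝ) ≤ 1 - r^2 := by nlinarith
  have a2 : (0:ℝ) ≤ 1 - r^2*(x^2*y^2) := by nlinarith [mul_nonneg hx2 hy2, sq_nonneg (x*y)]
  nlinarith [mul_nonneg a1 a2]

lemma scale_mem (r : ℝ) (hr0 : 0 < r) (hr1 : r < 1) (a l1 l2 : ℂ)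
    (h1 : ‖l1‖ ≤ 1) (h2 : ‖l2‖ ≤ 1)
    (ha : ‖a‖ ≤ pentaH l1 l2) :
    ((r:ℂ)*a, (r:ℂ)*(l1+l2), (r:ℂ)^2*(l1*l2)) ∈ pentablock := by
  refine ⟨(r:ℂ)*a, (r:ℂ)*l1, (r:ℂ)*l2, ?_, ?_, ?_, ?_⟩
  · rw [mem_ball_zero_iff, norm_mul, Complex.norm_of_nonneg hr0.le]
    nlinarith [norm_nonneg l1]
  · rw [mem_ball_zero_iff, norm_mul, Complex.norm_of_nonneg hr0.le]
    nlinarith [norm_nonneg l2]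
  · simp only [Prod.mk.injEq]
    refine ⟨trivial, by ring, by ring⟩
  · have hconj : ((r:ℂ)*l1) * (starRingEnd ℂ) ((r:ℂ)*l2) = (r:ℂ)^2 * (l1 * (starRingEnd ℂ) l2) := by
      rw [map_mul, Complex.conj_ofReal]; ring
    rw [hconj, norm_mul, norm_mul, norm_mul, Complex.norm_of_nonneg hr0.le]
    have hzle : ‖l1 * (starRingEnd ℂ) l2‖ ≤ 1 := by
      rw [norm_mul, Complex.norm_conj]
      exact mul_le_one₀ h1 (norm_nonneg _) h2
    have hk1 := key1 r hr0 hr1 (l1 * (starRingEnd ℂ) l2) hzle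
    have hk2 := key2 r hr0 hr1 (‖l1‖) (‖l2‖)
      (norm_nonneg _) h1 (norm_nonneg _) h2
    have hexp : ∀ w : ℂ, (r * ‖w‖)^2 = r^2 * (‖w‖)^2 := by
      intro w; ring
    rw [mul_pow, mul_pow]
    unfold pentaH at ha
    nlinarith [mul_le_mul_of_nonneg_left ha hr0.le, hk1, hk2]

lemma pentaH_le_two (l1 l2 : ℂ) (h1 : ‖l1‖ ≤ 1) (h2 : ‖l2‖ ≤ 1) :
    pentaH l1 l2 ≤ 2 := by
  unfold pentaH
  have ht : ‖1 - l1 * (starRingEnd ℂ) l2‖ ≤ 2 := by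
    calc ‖1 - l1 * (starRingEnd ℂ) l2‖ ≤
        ‖(1:ℂ)‖ + ‖l1 * (starRingEnd ℂ) l2‖ := by
          simpa using norm_sub_le (1:ℂ) (l1 * (starRingEnd ℂ) l2)
      _ ≤ 2 := by
          rw [norm_one, norm_mul, Complex.norm_conj]
          nlinarith [norm_nonneg l1, norm_nonneg l2]
  have hs1 : Real.sqrt (1 - ‖l1‖ ^ 2) ≤ 1 := by
    apply Real.sqrt_le_one.mpr; nlinarith [norm_nonneg l1]
  have hs2 : Real.sqrt (1 - ‖l2‖ ^ 2) ≤ 1 := by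
    apply Real.sqrt_le_one.mpr; nlinarith [norm_nonneg l2]
  nlinarith [Real.sqrt_nonneg (1 - ‖l1‖ ^ 2),
    Real.sqrt_nonneg (1 - ‖l2‖ ^ 2)]

lemma pentaT_compact : IsCompact pentaT := by
  have hb : pentaT ⊆ Metric.closedBall (0 : ℂ × ℂ × ℂ) 2 := by
    rintro ⟨a, l1, l2⟩ ⟨h1, h2, ha⟩
    rw [mem_closedBall_zero_iff]
    have hH := pentaH_le_two l1 l2 h1 h2
    simp only [Prod.norm_def]
    refine max_le (by linarith) (max_le (by linarith) (by linarith))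
  have hc : IsClosed pentaT := by
    have c1 : IsClosed {y : ℂ × ℂ × ℂ | ‖y.2.1‖ ≤ 1} :=
      isClosed_le (continuous_norm.comp (continuous_snd.fst)) continuous_const
    have c2 : IsClosed {y : ℂ × ℂ × ℂ | ‖y.2.2‖ ≤ 1} :=
      isClosed_le (continuous_norm.comp (continuous_snd.snd)) continuous_const
    have hHc : Continuous (fun y : ℂ × ℂ × ℂ => pentaH y.2.1 y.2.2) := by
      unfold pentaH
      have habs : Continuous (fun x : ℂ => ‖x‖) := continuous_norm
      have hst : Continuous (fun x : ℂ => (starRingEnd ℂ) x) := continuous_star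
      fun_prop
    have c3 : IsClosed {y : ℂ × ℂ × ℂ | ‖y.1‖ ≤ pentaH y.2.1 y.2.2} :=
      isClosed_le (continuous_norm.comp continuous_fst) hHc
    exact c1.inter (c2.inter c3)
  exact (isCompact_closedBall (0 : ℂ × ℂ × ℂ) 2).of_isClosed_subset hc hb

theorem stmt16 (r : ℝ) (hr0 : 0 < r) (hr1 : r < 1) :
    IsCompact (closure ((fun x : ℂ × ℂ × ℂ =>
        ((r : ℂ) * x.1, (r : ℂ) * x.2.1, (r : ℂ) ^ 2 * x.2.2)) '' pentablock)) ∧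
    closure ((fun x : ℂ × ℂ × ℂ =>
        ((r : ℂ) * x.1, (r : ℂ) * x.2.1, (r : ℂ) ^ 2 * x.2.2)) '' pentablock)
      ⊆ pentablock := by
  set f : ℂ × ℂ × ℂ → ℂ × ℂ × ℂ := fun x =>
    ((r : ℂ) * x.1, (r : ℂ) * x.2.1, (r : ℂ) ^ 2 * x.2.2) with hf
  set g : ℂ × ℂ × ℂ → ℂ × ℂ × ℂ := fun y => (y.1, y.2.1 + y.2.2, y.2.1 * y.2.2) with hg
  have hfc : Continuous f := by unfold f; fun_prop
  have hgc : Continuous g := by unfold g; fun_prop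
  have hK : IsCompact (f '' (g '' pentaT)) := (pentaT_compact.image hgc).image hfc
  have hsub : f '' pentablock ⊆ f '' (g '' pentaT) := by
    rintro _ ⟨x, ⟨a, l1, l2, hl1, hl2, rfl, hlt⟩, rfl⟩
    refine ⟨(a, l1 + l2, l1 * l2), ⟨(a, l1, l2), ⟨?_, ?_, le_of_lt hlt⟩, rfl⟩, rfl⟩
    · exact le_of_lt (by simpa using mem_ball_zero_iff.mp hl1)
    · exact le_of_lt (by simpa using mem_ball_zero_iff.mp hl2)
  have hKP : f '' (g '' pentaT) ⊆ pentablock := by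
    rintro _ ⟨_, ⟨⟨a, l1, l2⟩, ⟨h1, h2, ha⟩, rfl⟩, rfl⟩
    exact scale_mem r hr0 hr1 a l1 l2 h1 h2 ha
  have hcl : closure (f '' pentablock) ⊆ f '' (g '' pentaT) :=
    closure_minimal hsub hK.isClosed
  exact ⟨hK.of_isClosed_subset isClosed_closure hcl, hcl.trans hKP⟩
end

section
/- The set Ω := {(a, 2λ, λ²) ∈ ℂ³ : |a| < 1 - |λ|², λ ∈ 𝔻} equals the intersection of the pentablock 𝒫 with the set {(a,s,p) : s² = 4p}; moreover the map (a,s) ↦ (a, s, s²/4) is a homeomorphism from the ellipsoid Ω̃ = {(a,s) : |a| + |s|²/4 < 1} onto Ω. -/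
open Complex Metric

/-- `Ω = {(a, 2λ, λ²) : |a| < 1 - |λ|², λ ∈ 𝔻}`. -/
def royalFiber : Set (ℂ × ℂ × ℂ) :=
  {x | ∃ a l : ℂ, l ∈ ball (0:ℂ) 1 ∧ x = (a, 2 * l, l ^ 2) ∧
    ‖a‖ < 1 - ‖l‖ ^ 2}

/-- The ellipsoid `Ω̃ = {(a,s) : |a| + |s|²/4 < 1}`. -/
def ellipsoidSet : Set (ℂ × ℂ) :=
  {z | ‖z.1‖ + (‖z.2‖) ^ 2 / 4 < 1}

lemma bound_eq (l : ℂ) (hl : l ∈ ball (0:ℂ) 1) :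
    (1/2) * ‖1 - l * (starRingEnd ℂ) l‖ +
      (1/2) * Real.sqrt (1 - ‖l‖ ^ 2) * Real.sqrt (1 - ‖l‖ ^ 2)
    = 1 - ‖l‖ ^ 2 := by
  have hl1 : ‖l‖ < 1 := by simpa [mem_ball, dist_eq] using hl
  have hnn : (0:ℝ) ≤ 1 - ‖l‖ ^ 2 := by nlinarith [norm_nonneg l]
  have h1 : (1 : ℂ) - l * (starRingEnd ℂ) l = ((1 - ‖l‖ ^ 2 : ℝ) : ℂ) := by
    rw [Complex.mul_conj]
    push_cast [← Complex.sq_norm]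
    ring
  rw [h1, Complex.norm_real, Real.norm_of_nonneg hnn, mul_assoc,
    Real.mul_self_sqrt hnn]
  ring

theorem stmt17 :
    royalFiber = pentablock ∩ {x : ℂ × ℂ × ℂ | x.2.1 ^ 2 = 4 * x.2.2} ∧
    Set.BijOn (fun z : ℂ × ℂ => (z.1, z.2, z.2 ^ 2 / 4)) ellipsoidSet royalFiber ∧
    ContinuousOn (fun z : ℂ × ℂ => ((z.1, z.2, z.2 ^ 2 / 4) : ℂ × ℂ × ℂ)) ellipsoidSet ∧
    ContinuousOn (fun x : ℂ × ℂ × ℂ => ((x.1, x.2.1) : ℂ × ℂ)) royalFiber ∧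
    (∀ x ∈ royalFiber, ((x.1, x.2.1, x.2.1 ^ 2 / 4) : ℂ × ℂ × ℂ) = x) := by
  refine ⟨?_, ⟨?_, ?_, ?_⟩, ?_, ?_, ?_⟩
  · ext x
    constructor
    · rintro ⟨a, l, hl, rfl, ha⟩
      refine ⟨⟨a, l, l, hl, hl, by ring_nf, ?_⟩, by simp; ring⟩
      rwa [bound_eq l hl]
    · rintro ⟨⟨a, l1, l2, hl1, hl2, rfl, ha⟩, hs⟩
      simp only [Set.mem_setOf_eq] at hs
      have : (l1 - l2) ^ 2 = 0 := by ring_nf; ring_nf at hs; linear_combination hs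
      have hl12 : l1 = l2 := by
        have h0 := pow_eq_zero_iff (n := 2) (by norm_num) |>.mp this
        exact sub_eq_zero.mp h0
      subst hl12
      refine ⟨a, l1, hl1, by simp; constructor <;> ring, ?_⟩
      rwa [bound_eq l1 hl1] at ha
  · rintro ⟨a, s⟩ h
    exact ⟨a, s / 2, by
      simp only [mem_ball, dist_eq, sub_zero]
      simp only [ellipsoidSet, Set.mem_setOf_eq] at h
      rw [norm_div, Complex.norm_two]
      nlinarith [norm_nonneg s, norm_nonneg a], by
        simp; constructor <;> ring, by
      simp only [ellipsoidSet, Set.mem_setOf_eq] at h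
      rw [norm_div]
      simp only [Complex.norm_two]
      nlinarith [h]⟩
  · rintro ⟨a, s⟩ _ ⟨a', s'⟩ _ h
    simp only [Prod.mk.injEq] at h
    exact Prod.ext h.1 h.2.1
  · rintro x ⟨a, l, hl, rfl, ha⟩
    refine ⟨(a, 2 * l), ?_, ?_⟩
    · simp only [ellipsoidSet, Set.mem_setOf_eq]
      have hl2 : ‖2 * l‖ ^ 2 / 4 = ‖l‖ ^ 2 := by
        rw [norm_mul, Complex.norm_two]; ring
      rw [hl2]; linarith
    · simp; ring
  · fun_prop
  · fun_prop
  · rintro x ⟨a, l, hl, rfl, ha⟩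
    simp; ring
end

section
/- If ν(λ) = η(λ-α)/(1 - conj(α)λ) with η ∈ 𝕋, α ∈ 𝔻, and ω ∈ 𝕋, then the map f_{ω,ν}(a, λ₁+λ₂, λ₁λ₂) = (ω(1-|α|²)a / (1 - conj(α)(λ₁+λ₂) + conj(α)²λ₁λ₂), ν(λ₁)+ν(λ₂), ν(λ₁)ν(λ₂)) is well-defined on the pentablock 𝒫 (the denominator 1 - conj(α)s + conj(α)²p never vanishes on 𝒫) and maps 𝒫 into 𝒫. -/
open Complex Metric

lemma key_normSq (z w : ℂ) :
    Complex.normSq (1 - (starRingEnd ℂ) z * w) - Complex.normSq (w - z)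
      = (1 - Complex.normSq z) * (1 - Complex.normSq w) := by
  simp [Complex.normSq_apply, Complex.mul_re, Complex.mul_im, Complex.sub_re, Complex.sub_im]
  ring

lemma abs_sub_lt (α l : ℂ) (hα : ‖α‖ < 1) (hl : ‖l‖ < 1) :
    ‖l - α‖ < ‖1 - (starRingEnd ℂ) α * l‖ := by
  have hnα : Complex.normSq α < 1 := by rw [← Complex.sq_norm]; nlinarith [norm_nonneg α]
  have hnl : Complex.normSq l < 1 := by rw [← Complex.sq_norm]; nlinarith [norm_nonneg l]
  have hkey := key_normSq α l
  have hlt : Complex.normSq (l - α) < Complex.normSq (1 - (starRingEnd ℂ) α * l) := by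
    nlinarith [Complex.normSq_nonneg (l - α)]
  rw [Complex.norm_def, Complex.norm_def]
  exact Real.sqrt_lt_sqrt (Complex.normSq_nonneg _) hlt

lemma denom_ne (α l : ℂ) (hα : ‖α‖ < 1) (hl : ‖l‖ < 1) :
    (1 - (starRingEnd ℂ) α * l) ≠ 0 := by
  intro h
  have habs := abs_sub_lt α l hα hl
  rw [h] at habs
  simp at habs
  exact absurd habs (norm_nonneg _).not_gt

lemma nu_frac (η α l1 l2 : ℂ) (hηη : η * (starRingEnd ℂ) η = 1)
    (hd1 : (1 - (starRingEnd ℂ) α * l1) ≠ 0) (hd2 : (1 - (starRingEnd ℂ) α * l2) ≠ 0) :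
    1 - (η * (l1 - α) / (1 - (starRingEnd ℂ) α * l1)) *
        (starRingEnd ℂ) (η * (l2 - α) / (1 - (starRingEnd ℂ) α * l2))
      = ((1 - α * (starRingEnd ℂ) α) * (1 - l1 * (starRingEnd ℂ) l2)) /
        ((1 - (starRingEnd ℂ) α * l1) * (starRingEnd ℂ) (1 - (starRingEnd ℂ) α * l2)) := by
  have hc2 : (starRingEnd ℂ) (1 - (starRingEnd ℂ) α * l2) = 1 - α * (starRingEnd ℂ) l2 := by
    simp [map_sub, map_mul]
  have hc2' : (1 : ℂ) - α * (starRingEnd ℂ) l2 ≠ 0 := by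
    intro h
    apply hd2
    have := congrArg (starRingEnd ℂ) h
    simpa [map_sub, map_mul] using this
  rw [hc2, map_div₀, map_mul, map_sub, hc2, div_mul_div_comm,
    show η * (l1 - α) * ((starRingEnd ℂ) η * ((starRingEnd ℂ) l2 - (starRingEnd ℂ) α))
      = η * (starRingEnd ℂ) η * ((l1 - α) * ((starRingEnd ℂ) l2 - (starRingEnd ℂ) α)) from by ring,
    hηη, one_mul]
  rw [eq_div_iff (mul_ne_zero hd1 hc2'), sub_mul, div_mul_cancel₀ _ (mul_ne_zero hd1 hc2')]
  ring

theorem stmt18 (ω η α : ℂ) (hω : ‖ω‖ = 1) (hη : ‖η‖ = 1)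
    (hα : α ∈ ball (0:ℂ) 1)
    (ν : ℂ → ℂ) (hν : ∀ l : ℂ, ν l = η * (l - α) / (1 - (starRingEnd ℂ) α * l)) :
    (∀ x ∈ pentablock, 1 - (starRingEnd ℂ) α * x.2.1 + ((starRingEnd ℂ) α) ^ 2 * x.2.2 ≠ 0) ∧
    (∀ a l1 l2 : ℂ, l1 ∈ ball (0:ℂ) 1 → l2 ∈ ball (0:ℂ) 1 →
      ((a, l1 + l2, l1 * l2) : ℂ × ℂ × ℂ) ∈ pentablock →
      ((ω * (1 - ‖α‖ ^ 2) * a /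
          (1 - (starRingEnd ℂ) α * (l1 + l2) + ((starRingEnd ℂ) α) ^ 2 * (l1 * l2)),
        ν l1 + ν l2, ν l1 * ν l2) : ℂ × ℂ × ℂ) ∈ pentablock) := by
  have hα1 : ‖α‖ < 1 := by simpa using hα
  have hnα : Complex.normSq α < 1 := by rw [← Complex.sq_norm]; nlinarith [norm_nonneg α]
  have hnα0 : (0:ℝ) < 1 - Complex.normSq α := by linarith
  have hηη : η * (starRingEnd ℂ) η = 1 := by
    rw [Complex.mul_conj]
    norm_cast
    rw [← Complex.sq_norm, hη]; norm_num
  constructor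
  · rintro x ⟨a, l1, l2, h1, h2, rfl, hineq⟩
    have h1' : ‖l1‖ < 1 := by simpa using h1
    have h2' : ‖l2‖ < 1 := by simpa using h2
    simp only
    have e : 1 - (starRingEnd ℂ) α * (l1 + l2) + ((starRingEnd ℂ) α) ^ 2 * (l1 * l2)
        = (1 - (starRingEnd ℂ) α * l1) * (1 - (starRingEnd ℂ) α * l2) := by ring
    rw [e]
    exact mul_ne_zero (denom_ne α l1 hα1 h1') (denom_ne α l2 hα1 h2')
  · intro a l1 l2 h1 h2 hmem
    have h1' : ‖l1‖ < 1 := by simpa using h1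
    have h2' : ‖l2‖ < 1 := by simpa using h2
    have hn1 : Complex.normSq l1 < 1 := by
      rw [← Complex.sq_norm]; nlinarith [norm_nonneg l1]
    have hn2 : Complex.normSq l2 < 1 := by
      rw [← Complex.sq_norm]; nlinarith [norm_nonneg l2]
    set d1 := 1 - (starRingEnd ℂ) α * l1 with hd1def
    set d2 := 1 - (starRingEnd ℂ) α * l2 with hd2def
    have hd1 : d1 ≠ 0 := denom_ne α l1 hα1 h1'
    have hd2 : d2 ≠ 0 := denom_ne α l2 hα1 h2'
    have hr1 : 0 < ‖d1‖ := norm_pos_iff.mpr hd1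
    have hr2 : 0 < ‖d2‖ := norm_pos_iff.mpr hd2
    -- extract the inequality for l1 l2 from hmem
    obtain ⟨a', m1, m2, hm1, hm2, heq, hineq⟩ := hmem
    have ha' : a' = a := by
      have := congrArg Prod.fst heq; simpa using this.symm
    have hs : m1 + m2 = l1 + l2 := by
      have := congrArg (fun x => x.2.1) heq; simpa using this.symm
    have hp : m1 * m2 = l1 * l2 := by
      have := congrArg (fun x => x.2.2) heq; simpa using this.symm
    have hroot : (m1 - l1) * (m1 - l2) = 0 := by linear_combination m1 * hs - hp
    have hcases : (m1 = l1 ∧ m2 = l2) ∨ (m1 = l2 ∧ m2 = l1) := by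
      rcases mul_eq_zero.mp hroot with h | h
      · exact Or.inl ⟨sub_eq_zero.mp h, by linear_combination hs - h⟩
      · exact Or.inr ⟨sub_eq_zero.mp h, by linear_combination hs - h⟩
    have hineq' : ‖a‖ < (1/2) * ‖1 - l1 * (starRingEnd ℂ) l2‖ +
        (1/2) * Real.sqrt (1 - ‖l1‖ ^ 2) * Real.sqrt (1 - ‖l2‖ ^ 2) := by
      rw [ha'] at hineq
      rcases hcases with ⟨e1, e2⟩ | ⟨e1, e2⟩
      · rwa [e1, e2] at hineq
      · rw [e1, e2] at hineq
        have habseq : ‖1 - l2 * (starRingEnd ℂ) l1‖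
            = ‖1 - l1 * (starRingEnd ℂ) l2‖ := by
          rw [← Complex.norm_conj (1 - l1 * (starRingEnd ℂ) l2)]
          simp only [map_sub, map_mul, map_one, Complex.conj_conj]
          ring_nf
        rw [habseq] at hineq
        have hcomm : (1/2:ℝ) * Real.sqrt (1 - ‖l2‖ ^ 2)
              * Real.sqrt (1 - ‖l1‖ ^ 2)
            = (1/2) * Real.sqrt (1 - ‖l1‖ ^ 2)
              * Real.sqrt (1 - ‖l2‖ ^ 2) := by ring
        linarith
    clear hineq heq hcases hroot hs hp hm1 hm2 ha'
    -- key quantities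
    have habsν : ∀ l : ℂ, ‖ν l‖
        = ‖l - α‖ / ‖1 - (starRingEnd ℂ) α * l‖ := by
      intro l
      rw [hν, norm_div, norm_mul, hη, one_mul]
    have hball : ∀ l : ℂ, ‖l‖ < 1 → ‖ν l‖ < 1 := by
      intro l hl
      rw [habsν l, div_lt_one (norm_pos_iff.mpr (denom_ne α l hα1 hl))]
      exact abs_sub_lt α l hα1 hl
    refine ⟨_, ν l1, ν l2, ?_, ?_, rfl, ?_⟩
    · simpa using hball l1 h1'
    · simpa using hball l2 h2'
    -- now the main inequality
    have edenom : 1 - (starRingEnd ℂ) α * (l1 + l2) + ((starRingEnd ℂ) α) ^ 2 * (l1 * l2)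
        = d1 * d2 := by rw [hd1def, hd2def]; ring
    have hcast : ((1:ℂ) - (‖α‖ : ℂ) ^ 2) = ((1 - Complex.normSq α : ℝ) : ℂ) := by
      rw [← Complex.sq_norm]; push_cast; ring
    have hLHS : ‖ω * (1 - (‖α‖ : ℂ) ^ 2) * a /
        (1 - (starRingEnd ℂ) α * (l1 + l2) + ((starRingEnd ℂ) α) ^ 2 * (l1 * l2))‖
        = (1 - Complex.normSq α) * ‖a‖ / (‖d1‖ * ‖d2‖) := by
      rw [edenom, norm_div, norm_mul, norm_mul, hω, one_mul, hcast, Complex.norm_real,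
        Real.norm_eq_abs, abs_of_pos hnα0, norm_mul]
    have honeα : ((1:ℂ) - α * (starRingEnd ℂ) α) = ((1 - Complex.normSq α : ℝ) : ℂ) := by
      rw [Complex.mul_conj]; push_cast; ring
    have hmid : ‖1 - ν l1 * (starRingEnd ℂ) (ν l2)‖
        = (1 - Complex.normSq α) * ‖1 - l1 * (starRingEnd ℂ) l2‖
          / (‖d1‖ * ‖d2‖) := by
      rw [hν l1, hν l2, nu_frac η α l1 l2 hηη hd1 hd2, norm_div, norm_mul, norm_mul, honeα,
        Complex.norm_real, Real.norm_eq_abs, abs_of_pos hnα0, Complex.norm_conj]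
    have hsq : ∀ l : ℂ, ‖l‖ < 1 →
        1 - ‖ν l‖ ^ 2 = (1 - Complex.normSq α) * (1 - Complex.normSq l)
          / Complex.normSq (1 - (starRingEnd ℂ) α * l) := by
      intro l hl
      have hdl : (1 - (starRingEnd ℂ) α * l) ≠ 0 := denom_ne α l hα1 hl
      have hns : Complex.normSq (1 - (starRingEnd ℂ) α * l) ≠ 0 := (Complex.normSq_pos.mpr hdl).ne'
      rw [habsν l, div_pow, Complex.sq_norm, Complex.sq_norm]
      rw [← key_normSq α l]
      rw [one_sub_div hns]
    have hsqrt : ∀ l : ℂ, ‖l‖ < 1 →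
        Real.sqrt (1 - ‖ν l‖ ^ 2)
          = Real.sqrt (1 - Complex.normSq α) * Real.sqrt (1 - Complex.normSq l)
            / ‖1 - (starRingEnd ℂ) α * l‖ := by
      intro l hl
      have hnl : Complex.normSq l < 1 := by
        rw [← Complex.sq_norm]; nlinarith [norm_nonneg l]
      rw [hsq l hl, Real.sqrt_div (mul_nonneg hnα0.le (by linarith)), Real.sqrt_mul hnα0.le,
        Complex.norm_def]
    rw [hLHS, hmid, hsqrt l1 h1', hsqrt l2 h2']
    rw [Complex.sq_norm, Complex.sq_norm] at hineq'
    set s0 := Real.sqrt (1 - Complex.normSq α) with hs0def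
    set s1 := Real.sqrt (1 - Complex.normSq l1) with hs1def
    set s2 := Real.sqrt (1 - Complex.normSq l2) with hs2def
    set r1 := ‖d1‖ with hr1def
    set r2 := ‖d2‖ with hr2def
    set M := ‖1 - l1 * (starRingEnd ℂ) l2‖ with hMdef
    have hs0 : s0 * s0 = 1 - Complex.normSq α := Real.mul_self_sqrt hnα0.le
    have hc : (0:ℝ) < s0 * s0 / (r1 * r2) := by rw [hs0]; positivity
    rw [← hs0]
    calc s0 * s0 * ‖a‖ / (r1 * r2)
        = (s0 * s0 / (r1 * r2)) * ‖a‖ := by ring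
      _ < (s0 * s0 / (r1 * r2)) * (1/2 * M + 1/2 * s1 * s2) :=
          mul_lt_mul_of_pos_left hineq' hc
      _ = 1/2 * (s0 * s0 * M / (r1 * r2)) + 1/2 * (s0 * s1 / r1) * (s0 * s2 / r2) := by ring
end
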